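/- arXiv:1809.00362 — 2 statements merged into one kernel-verified Lean document; each statement's English description precedes it below -/
import Mathlib

section
/- Given positive reals V_0,...,V_L (level variances), W_0,...,W_L (level costs), and a variance budget constraint Σ_ℓ V_ℓ/M_ℓ ≤ ε², the choice M_ℓ = (1/ε²) √(V_ℓ/W_ℓ) · (Σ_{k=0}^{L} √(V_k W_k)) minimizes the total cost Σ_ℓ M_ℓ W_ℓ over all positive real vectors (M_0,...,M_L) satisfying the constraint, and the minimal total cost equals (1/ε²)(Σ_ℓ √(V_ℓ W_ℓ))². -/
open Finset Real

/-- Optimal MLMC sample allocation: the choice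
`M ℓ = ε⁻² √(V ℓ / W ℓ) ∑ₖ √(V k * W k)` satisfies the variance budget
`∑ V ℓ / M ℓ ≤ ε²`, minimizes the total cost `∑ M ℓ * W ℓ` among all positive
allocations satisfying the budget, and has total cost `ε⁻² (∑ √(V ℓ W ℓ))²`. -/
theorem mlmc_optimal_allocation
    (L : ℕ) (V W : Fin (L + 1) → ℝ) (hV : ∀ ℓ, 0 < V ℓ) (hW : ∀ ℓ, 0 < W ℓ)
    (ε : ℝ) (hε : 0 < ε)
    (M : Fin (L + 1) → ℝ)
    (hMdef : ∀ ℓ, M ℓ = ε⁻¹ ^ 2 * Real.sqrt (V ℓ / W ℓ)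
        * ∑ k : Fin (L + 1), Real.sqrt (V k * W k)) :
    (∑ ℓ : Fin (L + 1), V ℓ / M ℓ ≤ ε ^ 2) ∧
    (∀ N : Fin (L + 1) → ℝ, (∀ ℓ, 0 < N ℓ) →
        ∑ ℓ : Fin (L + 1), V ℓ / N ℓ ≤ ε ^ 2 →
        ∑ ℓ : Fin (L + 1), M ℓ * W ℓ ≤ ∑ ℓ : Fin (L + 1), N ℓ * W ℓ) ∧
    (∑ ℓ : Fin (L + 1), M ℓ * W ℓ
        = ε⁻¹ ^ 2 * (∑ ℓ : Fin (L + 1), Real.sqrt (V ℓ * W ℓ)) ^ 2) := by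
  set S := ∑ k : Fin (L + 1), Real.sqrt (V k * W k) with hSdef
  have hS : 0 < S := Finset.sum_pos (fun k _ => Real.sqrt_pos.mpr (mul_pos (hV k) (hW k))) ⟨0, by simp⟩
  have ht : ∀ ℓ, 0 < Real.sqrt (V ℓ / W ℓ) := fun ℓ => Real.sqrt_pos.mpr (div_pos (hV ℓ) (hW ℓ))
  -- Vℓ / √(Vℓ/Wℓ) = √(Vℓ Wℓ)
  have h2 : ∀ ℓ, V ℓ / Real.sqrt (V ℓ / W ℓ) = Real.sqrt (V ℓ * W ℓ) := by
    intro ℓ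
    rw [Real.sqrt_div (hV ℓ).le, Real.sqrt_mul (hV ℓ).le]
    have hv := Real.sq_sqrt (hV ℓ).le
    have hw : 0 < Real.sqrt (W ℓ) := Real.sqrt_pos.mpr (hW ℓ)
    have hv' : 0 < Real.sqrt (V ℓ) := Real.sqrt_pos.mpr (hV ℓ)
    field_simp
    nlinarith [hv]
  -- √(Vℓ/Wℓ) * Wℓ = √(Vℓ Wℓ)
  have h1 : ∀ ℓ, Real.sqrt (V ℓ / W ℓ) * W ℓ = Real.sqrt (V ℓ * W ℓ) := by
    intro ℓ
    rw [show V ℓ * W ℓ = V ℓ / W ℓ * (W ℓ) ^ 2 by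
        rw [div_mul_eq_mul_div, eq_div_iff (hW ℓ).ne']; ring,
      Real.sqrt_mul (div_pos (hV ℓ) (hW ℓ)).le, Real.sqrt_sq (hW ℓ).le]
  -- part 1
  have part1 : ∑ ℓ : Fin (L + 1), V ℓ / M ℓ = ε ^ 2 := by
    have key : ∀ ℓ : Fin (L + 1), V ℓ / M ℓ = ε ^ 2 * (Real.sqrt (V ℓ * W ℓ) / S) := by
      intro ℓ
      rw [hMdef ℓ, ← h2 ℓ]
      field_simp
    simp_rw [key, ← Finset.mul_sum, ← Finset.sum_div]
    field_simp
    exact hSdef.symm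
  -- part 3
  have part3 : ∑ ℓ : Fin (L + 1), M ℓ * W ℓ = ε⁻¹ ^ 2 * S ^ 2 := by
    have key : ∀ ℓ : Fin (L + 1), M ℓ * W ℓ = ε⁻¹ ^ 2 * S * Real.sqrt (V ℓ * W ℓ) := by
      intro ℓ
      rw [hMdef ℓ, ← h1 ℓ]; ring
    simp_rw [key, ← Finset.mul_sum, ← hSdef]
    ring
  refine ⟨part1.le, ?_, part3⟩
  intro N hN hNbud
  have hT : 0 < ∑ ℓ : Fin (L + 1), N ℓ * W ℓ :=
    Finset.sum_pos (fun ℓ _ => mul_pos (hN ℓ) (hW ℓ)) ⟨0, by simp⟩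
  have CS := Finset.sum_mul_sq_le_sq_mul_sq Finset.univ
    (fun ℓ => Real.sqrt (V ℓ / N ℓ)) (fun ℓ => Real.sqrt (N ℓ * W ℓ))
  have e1 : ∀ ℓ : Fin (L + 1),
      Real.sqrt (V ℓ / N ℓ) * Real.sqrt (N ℓ * W ℓ) = Real.sqrt (V ℓ * W ℓ) := by
    intro ℓ
    rw [← Real.sqrt_mul (div_pos (hV ℓ) (hN ℓ)).le]
    congr 1
    field_simp [(hN ℓ).ne']
  have e2 : ∀ ℓ : Fin (L + 1), Real.sqrt (V ℓ / N ℓ) ^ 2 = V ℓ / N ℓ := fun ℓ =>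
    Real.sq_sqrt (div_pos (hV ℓ) (hN ℓ)).le
  have e3 : ∀ ℓ : Fin (L + 1), Real.sqrt (N ℓ * W ℓ) ^ 2 = N ℓ * W ℓ := fun ℓ =>
    Real.sq_sqrt (mul_pos (hN ℓ) (hW ℓ)).le
  simp only [e1, e2, e3] at CS
  rw [part3]
  have hB : (∑ ℓ : Fin (L + 1), V ℓ / N ℓ) ≥ 0 :=
    Finset.sum_nonneg fun ℓ _ => (div_pos (hV ℓ) (hN ℓ)).le
  have hS2 : S ^ 2 ≤ ε ^ 2 * ∑ ℓ : Fin (L + 1), N ℓ * W ℓ := by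
    calc S ^ 2 ≤ (∑ ℓ : Fin (L + 1), V ℓ / N ℓ) * ∑ ℓ : Fin (L + 1), N ℓ * W ℓ := CS
      _ ≤ ε ^ 2 * ∑ ℓ : Fin (L + 1), N ℓ * W ℓ := by
          apply mul_le_mul_of_nonneg_right hNbud hT.le
  rw [inv_pow]
  rw [inv_mul_le_iff₀ (by positivity)]
  linarith [hS2]
end

section
/- In the case q_2 < dγ, with V_ℓ ≤ Q_S β^{−q_2 ℓ}, W_ℓ = c β^{dγℓ}, and L chosen so that β^{q_1 L} ≥ Q_W h_0^{q_1}/((1−θ)TOL) (i.e., L ≈ log(TOL^{−1})/(q_1 log β) up to constants), the MLMC cost satisfies W(TOL, L) ≤ K · TOL^{−2 − (dγ − q_2)/q_1} for a constant K independent of TOL. -/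
open Finset Real

/-- Worst-case MLMC complexity (`q₂ < dγ`): with the bias-matching deepest
level `L = ⌈log(Q_W h₀^{q₁}/((1−θ)TOL)) / (q₁ log β)⌉`, the optimally
allocated cost satisfies `W(TOL, L) ≤ K · TOL^{−2 − (dγ − q₂)/q₁}` for a
constant `K` independent of `TOL`. -/
theorem mlmc_cost_worst_case
    (Q_S Q_W c C_ν h₀ θ β d γ q₁ q₂ : ℝ)
    (hQS : 0 < Q_S) (hQW : 0 < Q_W) (hc : 0 < c) (hCν : 0 < C_ν) (hh₀ : 0 < h₀)
    (hθ : θ ∈ Set.Ioo (0 : ℝ) 1) (hβ : 1 < β) (hd : 1 ≤ d) (hγ : 0 < γ)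
    (hq₁ : 0 < q₁) (hq₂ : 0 < q₂) (hq₂dγ : q₂ < d * γ) (hq₁q₂ : q₂ / 2 ≤ q₁)
    (V W : ℕ → ℝ)
    (hV : ∀ ℓ, 0 ≤ V ℓ ∧ V ℓ ≤ Q_S * β ^ (-(q₂ * ℓ)))
    (hW : ∀ ℓ, W ℓ = c * β ^ (d * γ * ℓ)) :
    ∃ K : ℝ, 0 < K ∧ ∀ TOL : ℝ, 0 < TOL → TOL ≤ 1 →
      ∀ L : ℕ,
        L = ⌈Real.log (Q_W * h₀ ^ q₁ / ((1 - θ) * TOL)) / (q₁ * Real.log β)⌉₊ →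
        (C_ν / (θ * TOL)) ^ 2
            * (∑ ℓ ∈ Finset.range (L + 1), Real.sqrt (V ℓ * W ℓ)) ^ 2
          ≤ K * TOL ^ (-(2 + (d * γ - q₂) / q₁)) := by
  obtain ⟨hθ0, hθ1⟩ := hθ
  have hβ0 : (0:ℝ) < β := lt_trans one_pos hβ
  have hlogβ : 0 < Real.log β := Real.log_pos hβ
  have he : 0 < d * γ - q₂ := by linarith
  set a : ℝ := (d * γ - q₂) / q₁ with ha_def
  have ha : 0 < a := div_pos he hq₁
  set r : ℝ := β ^ ((d * γ - q₂) / 2) with hr_def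
  have hr1 : 1 < r := Real.one_lt_rpow_iff_of_pos hβ0 |>.mpr (Or.inl ⟨hβ, by linarith⟩)
  have hr0 : 0 < r := lt_trans one_pos hr1
  set M : ℝ := max (Q_W * h₀ ^ q₁ / (1 - θ)) 1 with hM_def
  have hM1 : (1:ℝ) ≤ M := le_max_right _ _
  have hM0 : 0 < M := lt_of_lt_of_le one_pos hM1
  set Q : ℝ := β ^ (2 * q₁) * M with hQ_def
  have hQ0 : 0 < Q := mul_pos (Real.rpow_pos_of_pos hβ0 _) hM0
  refine ⟨(C_ν / θ) ^ 2 * (Q_S * c) * Q ^ a / (r - 1) ^ 2, ?_, ?_⟩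
  · apply div_pos
    · exact mul_pos (mul_pos (pow_pos (div_pos hCν hθ0) 2) (mul_pos hQS hc))
        (Real.rpow_pos_of_pos hQ0 _)
    · exact pow_pos (by linarith) 2
  intro TOL hT0 hT1 L hL
  set x : ℝ := Real.log (Q_W * h₀ ^ q₁ / ((1 - θ) * TOL)) / (q₁ * Real.log β) with hx_def
  have hA0 : 0 < Q_W * h₀ ^ q₁ / ((1 - θ) * TOL) :=
    div_pos (mul_pos hQW (Real.rpow_pos_of_pos hh₀ _)) (mul_pos (by linarith) hT0)
  -- bound on L
  have hLle : (L : ℝ) ≤ max x 0 + 1 := by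
    rcases le_or_gt x 0 with hx0 | hx0
    · rw [hL, Nat.ceil_eq_zero.mpr hx0]
      simp [max_eq_right hx0]
    · have := Nat.ceil_lt_add_one hx0.le
      rw [hL]
      rw [max_eq_left hx0.le]
      exact_mod_cast this.le
  -- key: β ^ (q₁ * L) ≤ β ^ q₁ * M / TOL
  have hMT : (1:ℝ) ≤ M / TOL := by
    rw [le_div_iff₀ hT0]; nlinarith
  have key : β ^ (q₁ * (L:ℝ)) ≤ β ^ q₁ * (M / TOL) := by
    have h1 : β ^ (q₁ * (L:ℝ)) ≤ β ^ (q₁ * (max x 0 + 1)) := by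
      apply Real.rpow_le_rpow_of_exponent_le hβ.le
      have := hLle
      nlinarith
    have h2 : β ^ (q₁ * (max x 0 + 1)) = β ^ (q₁ * max x 0) * β ^ q₁ := by
      rw [← Real.rpow_add hβ0]; ring_nf
    have h3 : β ^ (q₁ * max x 0) ≤ M / TOL := by
      rcases le_or_gt x 0 with hx0 | hx0
      · rw [max_eq_right hx0, mul_zero, Real.rpow_zero]; exact hMT
      · rw [max_eq_left hx0.le]
        have hexp : β ^ (q₁ * x) = Q_W * h₀ ^ q₁ / ((1 - θ) * TOL) := by
          rw [Real.rpow_def_of_pos hβ0]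
          rw [hx_def]
          rw [show Real.log β * (q₁ * (Real.log (Q_W * h₀ ^ q₁ / ((1 - θ) * TOL)) / (q₁ * Real.log β))) = Real.log (Q_W * h₀ ^ q₁ / ((1 - θ) * TOL)) by
            field_simp]
          exact Real.exp_log hA0
        have hle : Q_W * h₀ ^ q₁ ≤ M * (1 - θ) :=
          (div_le_iff₀ (by linarith)).mp (le_max_left _ _)
        rw [hexp, div_le_div_iff₀ (mul_pos (by linarith : (0:ℝ) < 1 - θ) hT0) hT0]
        calc Q_W * h₀ ^ q₁ * TOL ≤ (M * (1 - θ)) * TOL :=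
              mul_le_mul_of_nonneg_right hle hT0.le
          _ = M * ((1 - θ) * TOL) := by ring
    calc β ^ (q₁ * (L:ℝ)) ≤ β ^ (q₁ * (max x 0 + 1)) := h1
      _ = β ^ (q₁ * max x 0) * β ^ q₁ := h2
      _ ≤ (M / TOL) * β ^ q₁ := by
          apply mul_le_mul_of_nonneg_right h3 (Real.rpow_pos_of_pos hβ0 _).le
      _ = β ^ q₁ * (M / TOL) := by ring
  -- sum bound
  set B : ℝ := Real.sqrt (Q_S * c) with hB_def
  have hB0 : 0 < B := Real.sqrt_pos.mpr (mul_pos hQS hc)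
  have hpt : ∀ ℓ : ℕ, Real.sqrt (V ℓ * W ℓ) ≤ B * r ^ ℓ := by
    intro ℓ
    have hWpos : 0 < W ℓ := by rw [hW ℓ]; exact mul_pos hc (Real.rpow_pos_of_pos hβ0 _)
    have hVW : V ℓ * W ℓ ≤ (Q_S * c) * β ^ ((d * γ - q₂) * ℓ) := by
      have h1 : V ℓ * W ℓ ≤ (Q_S * β ^ (-(q₂ * ℓ))) * (c * β ^ (d * γ * ℓ)) := by
        rw [hW ℓ]
        exact mul_le_mul_of_nonneg_right (hV ℓ).2 (by positivity)
      calc V ℓ * W ℓ ≤ Q_S * β ^ (-(q₂ * ℓ)) * (c * β ^ (d * γ * ℓ)) := h1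
        _ = (Q_S * c) * (β ^ (-(q₂ * ℓ)) * β ^ (d * γ * ℓ)) := by ring
        _ = (Q_S * c) * β ^ ((d * γ - q₂) * ℓ) := by
            rw [← Real.rpow_add hβ0]; ring_nf
    have hsq : Real.sqrt ((Q_S * c) * β ^ ((d * γ - q₂) * ℓ)) = B * r ^ ℓ := by
      rw [Real.sqrt_mul (mul_pos hQS hc).le, hB_def]
      congr 1
      rw [hr_def, ← Real.rpow_natCast (β ^ ((d * γ - q₂) / 2)) ℓ, ← Real.rpow_mul hβ0.le]
      rw [Real.sqrt_eq_rpow, ← Real.rpow_mul hβ0.le]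
      ring_nf
    calc Real.sqrt (V ℓ * W ℓ) ≤ Real.sqrt ((Q_S * c) * β ^ ((d * γ - q₂) * ℓ)) :=
          Real.sqrt_le_sqrt hVW
      _ = B * r ^ ℓ := hsq
  have hsum : ∑ ℓ ∈ Finset.range (L + 1), Real.sqrt (V ℓ * W ℓ) ≤ B * (r ^ (L+1) / (r - 1)) := by
    calc ∑ ℓ ∈ Finset.range (L + 1), Real.sqrt (V ℓ * W ℓ)
        ≤ ∑ ℓ ∈ Finset.range (L + 1), B * r ^ ℓ :=
          Finset.sum_le_sum fun ℓ _ => hpt ℓ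
      _ = B * ∑ ℓ ∈ Finset.range (L + 1), r ^ ℓ := by rw [Finset.mul_sum]
      _ = B * ((r ^ (L+1) - 1) / (r - 1)) := by rw [geom_sum_eq (ne_of_gt hr1)]
      _ ≤ B * (r ^ (L+1) / (r - 1)) := by
          gcongr
          · linarith
  -- power bound
  have key' : β ^ (q₁ * ((L:ℝ) + 1)) ≤ Q / TOL := by
    have : β ^ (q₁ * ((L:ℝ) + 1)) = β ^ (q₁ * (L:ℝ)) * β ^ q₁ := by
      rw [← Real.rpow_add hβ0]; ring_nf
    rw [this, hQ_def]
    calc β ^ (q₁ * (L:ℝ)) * β ^ q₁ ≤ (β ^ q₁ * (M / TOL)) * β ^ q₁ :=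
          mul_le_mul_of_nonneg_right key (Real.rpow_pos_of_pos hβ0 _).le
      _ = (β ^ q₁ * β ^ q₁) * M / TOL := by ring
      _ = β ^ (2 * q₁) * M / TOL := by
          rw [← Real.rpow_add hβ0]; ring_nf
  have hpow : (r ^ (L+1)) ^ 2 ≤ Q ^ a * TOL ^ (-a) := by
    have e1 : (r ^ (L+1)) ^ 2 = β ^ ((d * γ - q₂) * ((L:ℝ) + 1)) := by
      rw [hr_def, ← Real.rpow_natCast (β ^ ((d * γ - q₂) / 2)) (L+1),
        ← Real.rpow_mul hβ0.le, ← Real.rpow_natCast (β ^ _) 2, ← Real.rpow_mul hβ0.le]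
      push_cast
      ring_nf
    have e2 : β ^ ((d * γ - q₂) * ((L:ℝ) + 1)) = (β ^ (q₁ * ((L:ℝ) + 1))) ^ a := by
      rw [← Real.rpow_mul hβ0.le]
      congr 1
      rw [ha_def]
      field_simp
    rw [e1, e2]
    calc (β ^ (q₁ * ((L:ℝ) + 1))) ^ a ≤ (Q / TOL) ^ a :=
          Real.rpow_le_rpow (Real.rpow_nonneg hβ0.le _) key' ha.le
      _ = Q ^ a * TOL ^ (-a) := by
          rw [Real.div_rpow hQ0.le hT0.le, Real.rpow_neg hT0.le, div_eq_mul_inv]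
  set S : ℝ := ∑ ℓ ∈ Finset.range (L + 1), Real.sqrt (V ℓ * W ℓ) with hS_def
  have hS0 : 0 ≤ S := Finset.sum_nonneg fun ℓ _ => Real.sqrt_nonneg _
  have hS2 : S ^ 2 ≤ (Q_S * c) * (Q ^ a * TOL ^ (-a)) / (r - 1) ^ 2 := by
    have h1 : S ^ 2 ≤ (B * (r ^ (L+1) / (r - 1))) ^ 2 := by
      apply pow_le_pow_left₀ hS0 hsum
    have h2 : (B * (r ^ (L+1) / (r - 1))) ^ 2 = (Q_S * c) * ((r ^ (L+1)) ^ 2) / (r - 1) ^ 2 := by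
      rw [mul_pow, div_pow, hB_def, Real.sq_sqrt (mul_pos hQS hc).le]
      ring
    rw [h2] at h1
    refine h1.trans ?_
    gcongr
  have hTsplit : TOL ^ (-(2 + a)) = (TOL ^ 2)⁻¹ * TOL ^ (-a) := by
    rw [show -(2 + a) = (-2 : ℝ) + (-a) by ring, Real.rpow_add hT0,
      Real.rpow_neg hT0.le, show ((2:ℝ)) = ((2:ℕ):ℝ) by norm_num, Real.rpow_natCast]
  calc (C_ν / (θ * TOL)) ^ 2 * S ^ 2
      ≤ (C_ν / (θ * TOL)) ^ 2 * ((Q_S * c) * (Q ^ a * TOL ^ (-a)) / (r - 1) ^ 2) := by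
        apply mul_le_mul_of_nonneg_left hS2 (sq_nonneg _)
    _ = (C_ν / θ) ^ 2 * (Q_S * c) * Q ^ a / (r - 1) ^ 2 * TOL ^ (-(2 + a)) := by
        rw [hTsplit]
        have hr1' : r - 1 ≠ 0 := ne_of_gt (by linarith)
        field_simp
end
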